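/- For any convex combination ρ = αμ + (1−α)ν of computable measures μ and ν with α ∈ (0,1) a computable real, the ρ-Martin-Löf random sequences are exactly the union of the μ-Martin-Löf random sequences and the ν-Martin-Löf random sequences. -/

import Mathlib

open MeasureTheory Filter

/-- Cantor space `2^ω`. -/
abbrev Cantor : Type := ℕ → Bool

/-- The first `n` bits of a sequence, as a finite binary string. -/
def pref (X : Cantor) (n : ℕ) : List Bool := List.ofFn fun i : Fin n => X i

/-- The basic open (cylinder) set determined by a finite string `σ`. -/
def cyl (σ : List Bool) : Set Cantor := {X | pref X σ.length = σ}

/-- Partial recursiveness relative to an oracle `O : ℕ → ℕ`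
(the clauses of `Nat.Partrec` plus an oracle clause). -/
inductive RecIn (O : ℕ → ℕ) : (ℕ →. ℕ) → Prop
  | zero : RecIn O (pure 0)
  | succ : RecIn O Nat.succ
  | left : RecIn O ↑fun n : ℕ => n.unpair.1
  | right : RecIn O ↑fun n : ℕ => n.unpair.2
  | oracle : RecIn O ↑O
  | pair {f g} : RecIn O f → RecIn O g → RecIn O fun n => Nat.pair <$> f n <*> g n
  | comp {f g} : RecIn O f → RecIn O g → RecIn O fun n => g n >>= f
  | prec {f g} : RecIn O f → RecIn O g → RecIn O (Nat.unpaired fun a n =>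
      n.rec (f a) fun y IH => do let i ← IH; g (Nat.pair a (Nat.pair y i)))
  | rfind {f} : RecIn O f →
      RecIn O fun a => Nat.rfind fun n => (fun m => m = 0) <$> f (Nat.pair a n)

/-- `f` is computable relative to the oracle `A ∈ 2^ω`. -/
def ComputableInOracle (A : Cantor) {α β : Type} [Primcodable α] [Primcodable β]
    (f : α → β) : Prop :=
  RecIn (fun n => (A n).toNat) fun n =>
    Part.bind (Part.ofOption (Encodable.decode (α := α) n)) fun a =>
      Part.some (Encodable.encode (f a))

/-- `X ∈ 2^ω` is a computable sequence. -/
def ComputableSeq (X : Cantor) : Prop := Computable X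

/-- A computable real: one with a computable sequence of rational approximations. -/
def ComputableReal (r : ℝ) : Prop :=
  ∃ q : ℕ → ℚ, Computable q ∧ ∀ n, |r - (q n : ℝ)| ≤ (2 : ℝ)⁻¹ ^ n

/-- A computable probability measure on Cantor space: the measures of cylinders are
uniformly computable reals. -/
def ComputableMeasure (μ : Measure Cantor) : Prop :=
  IsProbabilityMeasure μ ∧
    ∃ q : List Bool → ℕ → ℚ, Computable₂ q ∧
      ∀ σ n, |(μ (cyl σ)).toReal - (q σ n : ℝ)| ≤ (2 : ℝ)⁻¹ ^ n

/-- A uniformly effectively open sequence of classes: each `U i` is the union of a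
computable enumeration of cylinders. -/
def EffOpen (U : ℕ → Set Cantor) : Prop :=
  ∃ f : ℕ → ℕ → Option (List Bool), Computable₂ f ∧
    ∀ i, U i = ⋃ n : ℕ, Option.elim (f i n) ∅ cyl

/-- A uniformly `A`-effectively open sequence of classes. -/
def EffOpenIn (A : Cantor) (U : ℕ → Set Cantor) : Prop :=
  ∃ f : ℕ → ℕ → Option (List Bool), ComputableInOracle A (fun p : ℕ × ℕ => f p.1 p.2) ∧
    ∀ i, U i = ⋃ n : ℕ, Option.elim (f i n) ∅ cyl

/-- A `μ`-Martin-Löf test. -/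
def MLTest (μ : Measure Cantor) (U : ℕ → Set Cantor) : Prop :=
  EffOpen U ∧ ∀ i, μ (U i) ≤ (2 : ENNReal)⁻¹ ^ i

/-- `X` is `μ`-Martin-Löf random. -/
def MLRandom (μ : Measure Cantor) (X : Cantor) : Prop :=
  ∀ U : ℕ → Set Cantor, MLTest μ U → X ∉ ⋂ i, U i

/-- A `μ`-Martin-Löf test relative to the oracle `A`. -/
def MLTestIn (A : Cantor) (μ : Measure Cantor) (U : ℕ → Set Cantor) : Prop :=
  EffOpenIn A U ∧ ∀ i, μ (U i) ≤ (2 : ENNReal)⁻¹ ^ i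

/-- `X` is `μ`-Martin-Löf random relative to the oracle `A`. -/
def MLRandomIn (A : Cantor) (μ : Measure Cantor) (X : Cantor) : Prop :=
  ∀ U : ℕ → Set Cantor, MLTestIn A μ U → X ∉ ⋂ i, U i

/-- A `μ`-Schnorr test: a Martin-Löf test whose levels have measure exactly `2⁻ⁱ`. -/
def SchnorrTest (μ : Measure Cantor) (U : ℕ → Set Cantor) : Prop :=
  EffOpen U ∧ ∀ i, μ (U i) = (2 : ENNReal)⁻¹ ^ i

/-- `X` is `μ`-Schnorr random. -/
def SchnorrRandom (μ : Measure Cantor) (X : Cantor) : Prop :=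
  ∀ U : ℕ → Set Cantor, SchnorrTest μ U → X ∉ ⋂ i, U i

/-- The set of atoms of `μ`. -/
def Atoms (μ : Measure Cantor) : Set Cantor := {X | 0 < μ {X}}

/-- `lam` is the uniform (Lebesgue) measure on Cantor space. -/
def IsLebesgue (lam : Measure Cantor) : Prop :=
  ∀ σ : List Bool, lam (cyl σ) = (2 : ENNReal)⁻¹ ^ σ.length

/-- A total (truth-table) functional: every output bit is a computable function of a
computably bounded finite initial segment of the input. -/
def TTFunctional (Φ : Cantor → Cantor) : Prop :=
  ∃ (u : ℕ → ℕ) (g : List Bool → ℕ → Bool), Computable u ∧ Computable₂ g ∧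
    ∀ X n, Φ X n = g (pref X (u n)) n

/-- `B` is a Δ⁰₂ sequence: it has a uniformly computable approximation converging
pointwise to it. -/
def Delta02 (B : Cantor) : Prop :=
  ∃ Bs : ℕ → Cantor, Computable₂ (fun s n => Bs s n) ∧
    ∀ n, ∃ N, ∀ s, N ≤ s → Bs s n = B n

/-- `theta As X n` is the least stage `s` with `X↾n = As s↾n`, and `⊤ = +∞` if there
is no such stage. -/
noncomputable def theta (As : ℕ → Cantor) (X : Cantor) (n : ℕ) : ℕ∞ :=
  sInf {e : ℕ∞ | ∃ s : ℕ, e = (s : ℕ∞) ∧ pref X n = pref (As s) n}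

open Classical in
/-- The tally functional determined by the approximation `As`: the output is
`1^{θ(X,0)} 0 1^{θ(X,1)} 0 ⋯`, continuing with `1^ω` as soon as some `θ(X,n) = +∞`
(position `k` is a `0` exactly when `k = θ(X,0) + ⋯ + θ(X,m) + m` for some `m`). -/
noncomputable def tally (As : ℕ → Cantor) (X : Cantor) : Cantor := fun k =>
  if ∃ m : ℕ, (k : ℕ∞) = (∑ i ∈ Finset.range (m + 1), theta As X i) + (m : ℕ∞)
    then false else true

/-- The join `A ⊕ B` of two sequences. -/
def join (A B : Cantor) : Cantor := fun k => if k % 2 = 0 then A (k / 2) else B (k / 2)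
namespace S1
lemma length_pref (X : Cantor) (n : ℕ) : (pref X n).length = n := by simp [pref]

lemma take_pref (X : Cantor) {m n : ℕ} (h : m ≤ n) : (pref X n).take m = pref X m := by
  apply List.ext_getElem
  · simp [pref, h]
  · intro i h1 h2
    simp [pref, List.getElem_take]

lemma cyl_mono {σ τ : List Bool} (h : σ <+: τ) : cyl τ ⊆ cyl σ := by
  intro X hX
  have hlen : σ.length ≤ τ.length := h.length_le
  have h1 : σ = τ.take σ.length := List.prefix_iff_eq_take.1 h
  show pref X σ.length = σ
  calc pref X σ.length = (pref X τ.length).take σ.length := (take_pref X hlen).symm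
    _ = τ.take σ.length := by rw [hX]
    _ = σ := h1.symm

lemma compat {σ τ : List Bool} {X : Cantor} (hσ : X ∈ cyl σ) (hτ : X ∈ cyl τ)
    (h : σ.length ≤ τ.length) : σ <+: τ := by
  have hσ' : pref X σ.length = σ := hσ
  have hτ' : pref X τ.length = τ := hτ
  rw [← hσ', ← hτ']
  exact (take_pref X h) ▸ List.take_prefix _ _

def combOpt (o₁ o₂ : Option (List Bool)) : Option (List Bool) :=
  o₁.bind fun σ => o₂.bind fun τ =>
    if σ = τ.take σ.length then some τ else if τ = σ.take τ.length then some σ else none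

lemma cyl_inter (σ τ : List Bool) :
    cyl σ ∩ cyl τ = Option.elim
      (if σ = τ.take σ.length then some τ else
        if τ = σ.take τ.length then some σ else none) ∅ cyl := by
  by_cases h1 : σ = τ.take σ.length
  · rw [if_pos h1]
    exact Set.inter_eq_right.2 (cyl_mono (List.prefix_iff_eq_take.2 h1))
  by_cases h2 : τ = σ.take τ.length
  · rw [if_neg h1, if_pos h2]
    exact Set.inter_eq_left.2 (cyl_mono (List.prefix_iff_eq_take.2 h2))
  · rw [if_neg h1, if_neg h2]
    ext X
    simp only [Set.mem_inter_iff, Option.elim, Set.mem_empty_iff_false, iff_false, not_and]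
    intro hσ hτ
    rcases le_total σ.length τ.length with h | h
    · exact h1 (List.prefix_iff_eq_take.1 (compat hσ hτ h))
    · exact h2 (List.prefix_iff_eq_take.1 (compat hτ hσ h))

lemma elim_combOpt (o₁ o₂ : Option (List Bool)) :
    Option.elim (combOpt o₁ o₂) ∅ cyl = Option.elim o₁ ∅ cyl ∩ Option.elim o₂ ∅ cyl := by
  cases o₁ with
  | none => simp [combOpt]
  | some σ =>
    cases o₂ with
    | none => simp [combOpt]
    | some τ => exact (cyl_inter σ τ).symm

lemma primrec_take : Primrec₂ (fun (l : List Bool) (n : ℕ) => l.take n) := by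
  have h : Primrec₂ (fun (l : List Bool) (n : ℕ) =>
      (List.range n).flatMap fun i => (l[i]?).toList) := by
    apply Primrec.list_flatMap (Primrec.list_range.comp Primrec.snd)
    have hget : Primrec (fun p : (List Bool × ℕ) × ℕ => p.1.1[p.2]?) :=
      Primrec.list_getElem?.comp (Primrec.fst.comp Primrec.fst) Primrec.snd
    have hg : Primrec₂ (fun (_ : (List Bool × ℕ) × ℕ) (b : Bool) => [b]) :=
      (Primrec.list_cons.comp Primrec.snd (Primrec.const [])).to₂
    exact (Primrec.option_casesOn hget (Primrec.const ([] : List Bool)) hg).of_eq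
      (fun p => by cases h : p.1.1[p.2]? <;> simp [h, Option.toList])
  apply h.of_eq
  intro l n
  induction n with
  | zero => simp
  | succ n ih =>
    rw [List.range_succ, List.flatMap_append, ih, List.take_succ]
    simp

lemma primrec_combOpt : Primrec₂ combOpt := by
  have core : Primrec₂ (fun σ τ : List Bool => if σ = τ.take σ.length then some τ
      else if τ = σ.take τ.length then some σ else none) := by
    have c1 : PrimrecPred fun p : List Bool × List Bool => p.1 = p.2.take p.1.length :=
      Primrec.eq.comp Primrec.fst
        (primrec_take.comp Primrec.snd (Primrec.list_length.comp Primrec.fst))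
    have c2 : PrimrecPred fun p : List Bool × List Bool => p.2 = p.1.take p.2.length :=
      Primrec.eq.comp Primrec.snd
        (primrec_take.comp Primrec.fst (Primrec.list_length.comp Primrec.snd))
    exact (Primrec.ite c1 (Primrec.option_some.comp Primrec.snd)
      (Primrec.ite c2 (Primrec.option_some.comp Primrec.fst) (Primrec.const none))).to₂
  exact (Primrec.option_bind Primrec.fst
    ((Primrec.option_bind (Primrec.snd.comp Primrec.fst)
      (core.comp (Primrec.snd.comp Primrec.fst) Primrec.snd).to₂).to₂ :
        Primrec₂ fun (p : Option (List Bool) × Option (List Bool)) σ =>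
          p.2.bind fun τ => if σ = τ.take σ.length then some τ
            else if τ = σ.take τ.length then some σ else none)).to₂

lemma effOpen_inter {U V : ℕ → Set Cantor} (hU : EffOpen U) (hV : EffOpen V) :
    EffOpen fun i => U i ∩ V i := by
  obtain ⟨f, hfc, hfU⟩ := hU
  obtain ⟨g, hgc, hgU⟩ := hV
  refine ⟨fun i n => combOpt (f i n.unpair.1) (g i n.unpair.2), ?_, ?_⟩
  · have h1 : Computable fun p : ℕ × ℕ => f p.1 p.2.unpair.1 :=
      hfc.comp Computable.fst
        (Computable.fst.comp (Computable.unpair.comp Computable.snd))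
    have h2 : Computable fun p : ℕ × ℕ => g p.1 p.2.unpair.2 :=
      hgc.comp Computable.fst
        (Computable.snd.comp (Computable.unpair.comp Computable.snd))
    exact primrec_combOpt.to_comp.comp h1 h2
  · intro i
    show U i ∩ V i = _
    rw [hfU i, hgU i]
    ext X
    simp only [Set.mem_iUnion, Set.mem_inter_iff]
    constructor
    · rintro ⟨⟨a, ha⟩, ⟨b, hb⟩⟩
      refine ⟨Nat.pair a b, ?_⟩
      rw [elim_combOpt, Nat.unpair_pair]
      exact ⟨ha, hb⟩
    · rintro ⟨n, hn⟩
      rw [elim_combOpt] at hn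
      exact ⟨⟨n.unpair.1, hn.1⟩, ⟨n.unpair.2, hn.2⟩⟩

lemma effOpen_shift {U : ℕ → Set Cantor} (hU : EffOpen U) (c : ℕ) :
    EffOpen fun i => U (i + c) := by
  obtain ⟨f, hfc, hfU⟩ := hU
  refine ⟨fun i n => f (i + c) n, ?_, fun i => hfU (i + c)⟩
  exact hfc.comp ((Primrec.nat_add.comp Primrec.fst (Primrec.const c)).to_comp) Computable.snd

lemma absorb {μ ρ : Measure Cantor} {a : ENNReal} (ha0 : a ≠ 0) (hat : a ≠ ⊤)
    (hle : ∀ S : Set Cantor, a * μ S ≤ ρ S) {X : Cantor} (h : MLRandom μ X) :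
    MLRandom ρ X := by
  rintro U ⟨hEff, hB⟩ hX
  obtain ⟨c, hc⟩ := ENNReal.exists_inv_two_pow_lt ha0
  refine h (fun i => U (i + c)) ⟨effOpen_shift hEff c, ?_⟩ ?_
  · intro i
    have h1 : a * μ (U (i + c)) ≤ a * (2 : ENNReal)⁻¹ ^ i := by
      calc a * μ (U (i + c)) ≤ ρ (U (i + c)) := hle _
        _ ≤ (2 : ENNReal)⁻¹ ^ (i + c) := hB _
        _ = (2 : ENNReal)⁻¹ ^ c * (2 : ENNReal)⁻¹ ^ i := by rw [pow_add, mul_comm]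
        _ ≤ a * (2 : ENNReal)⁻¹ ^ i := mul_le_mul_left hc.le _
    exact (ENNReal.mul_le_mul_iff_right ha0 hat).1 h1
  · exact Set.mem_iInter.2 fun i => Set.mem_iInter.1 hX (i + c)

end S1

/-- For a convex combination `ρ = αμ + (1-α)ν` with `α ∈ (0,1)` a computable real,
`MLR_ρ = MLR_μ ∪ MLR_ν`. -/
theorem stmt1 (μ ν : Measure Cantor) (hμ : ComputableMeasure μ) (hν : ComputableMeasure ν)
    (α : ℝ) (hα0 : 0 < α) (hα1 : α < 1) (hαc : ComputableReal α) (X : Cantor) :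
    MLRandom (ENNReal.ofReal α • μ + ENNReal.ofReal (1 - α) • ν) X ↔
      MLRandom μ X ∨ MLRandom ν X := by
  set ρ := ENNReal.ofReal α • μ + ENNReal.ofReal (1 - α) • ν with hρ
  have hρapp : ∀ S : Set Cantor,
      ρ S = ENNReal.ofReal α * μ S + ENNReal.ofReal (1 - α) * ν S := by
    intro S
    simp [hρ, Measure.add_apply, Measure.smul_apply, smul_eq_mul]
  constructor
  · intro h
    by_contra hcon
    push_neg at hcon
    obtain ⟨hμr, hνr⟩ := hcon
    unfold MLRandom at hμr hνr
    push_neg at hμr hνr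
    obtain ⟨U, hU, hXU⟩ := hμr
    obtain ⟨V, hV, hXV⟩ := hνr
    refine h (fun i => U i ∩ V i) ⟨S1.effOpen_inter hU.1 hV.1, ?_⟩ ?_
    · intro i
      have key : α + (1 - α) = 1 := by ring
      calc ρ (U i ∩ V i)
          = ENNReal.ofReal α * μ (U i ∩ V i) + ENNReal.ofReal (1 - α) * ν (U i ∩ V i) :=
            hρapp _
        _ ≤ ENNReal.ofReal α * μ (U i) + ENNReal.ofReal (1 - α) * ν (V i) :=
            add_le_add (mul_le_mul_right (measure_mono Set.inter_subset_left) _)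
              (mul_le_mul_right (measure_mono Set.inter_subset_right) _)
        _ ≤ ENNReal.ofReal α * (2 : ENNReal)⁻¹ ^ i
              + ENNReal.ofReal (1 - α) * (2 : ENNReal)⁻¹ ^ i :=
            add_le_add (mul_le_mul_right (hU.2 i) _) (mul_le_mul_right (hV.2 i) _)
        _ = (ENNReal.ofReal α + ENNReal.ofReal (1 - α)) * (2 : ENNReal)⁻¹ ^ i :=
            (add_mul _ _ _).symm
        _ = (2 : ENNReal)⁻¹ ^ i := by
            rw [← ENNReal.ofReal_add hα0.le (by linarith : (0:ℝ) ≤ 1 - α), key,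
              ENNReal.ofReal_one, one_mul]
    · exact Set.mem_iInter.2 fun i => ⟨Set.mem_iInter.1 hXU i, Set.mem_iInter.1 hXV i⟩
  · rintro (h | h)
    · exact S1.absorb (ENNReal.ofReal_pos.2 hα0).ne' ENNReal.ofReal_ne_top
        (fun S => by rw [hρapp]; exact le_add_right le_rfl) h
    · exact S1.absorb (ENNReal.ofReal_pos.2 (by linarith : (0:ℝ) < 1 - α)).ne'
        ENNReal.ofReal_ne_top
        (fun S => by rw [hρapp]; exact le_add_left le_rfl) h
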